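/- arXiv:2107.01847 — 6 statements merged into one kernel-verified Lean document; each statement's English description precedes it below -/
import Mathlib

section
/- If $x_1, x_2, x_3$ are the (real) roots of the monic cubic $x^3 + ax^2 + bx + c$, so that $x_1 + x_2 + x_3 = -a$ and $x_1x_2 + x_1x_3 + x_2x_3 = b$, then the common side length of the equilateral triangle with vertices $(x_1,(x_2-x_3)/\sqrt{3})$, $(x_2,(x_3-x_1)/\sqrt{3})$, $(x_3,(x_1-x_2)/\sqrt{3})$ equals $\frac{\sqrt{12}}{3}\sqrt{a^2 - 3b}$. -/
theorem stmt_6 (a b x₁ x₂ x₃ : ℝ)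
    (hsum : x₁ + x₂ + x₃ = -a)
    (hprod : x₁*x₂ + x₁*x₃ + x₂*x₃ = b) :
    let d : ℝ × ℝ → ℝ × ℝ → ℝ := fun P Q => Real.sqrt ((P.1 - Q.1)^2 + (P.2 - Q.2)^2)
    let P : ℝ × ℝ := (x₁, (x₂ - x₃)/Real.sqrt 3)
    let Q : ℝ × ℝ := (x₂, (x₃ - x₁)/Real.sqrt 3)
    let R : ℝ × ℝ := (x₃, (x₁ - x₂)/Real.sqrt 3)
    d P Q = (Real.sqrt 12 / 3) * Real.sqrt (a^2 - 3*b) ∧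
    d Q R = (Real.sqrt 12 / 3) * Real.sqrt (a^2 - 3*b) ∧
    d R P = (Real.sqrt 12 / 3) * Real.sqrt (a^2 - 3*b) := by
  intro d P Q R
  have h3 : Real.sqrt 3 ^ 2 = 3 := Real.sq_sqrt (by norm_num)
  have h3ne : Real.sqrt 3 ≠ 0 := by positivity
  have hR : Real.sqrt 12 / 3 * Real.sqrt (a^2 - 3*b) = Real.sqrt (4/3 * (a^2 - 3*b)) := by
    rw [show (12:ℝ) = (4/3) * 3^2 by norm_num, Real.sqrt_mul (by norm_num),
      Real.sqrt_sq (by norm_num), Real.sqrt_mul (by norm_num : (0:ℝ) ≤ 4/3)]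
    ring
  refine ⟨?_, ?_, ?_⟩ <;>
  · show Real.sqrt _ = _
    rw [hR]
    congr 1
    simp only [P, Q, R]
    field_simp
    rw [h3]
    linear_combination (12*x₁+12*x₂+12*x₃-12*a)*hsum - 36*hprod
end

section
/- If the monic cubic $x^3 + ax^2 + bx + c$ has three real roots $x_3 \le x_2 \le x_1$, then $x_1 - x_3 \le \frac{\sqrt{12}}{3}\sqrt{a^2 - 3b}$, with equality exactly for the balanced cubic (when $x_2$ is the midpoint of $x_1$ and $x_3$). -/
theorem stmt_12 (a b x₁ x₂ x₃ : ℝ)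
    (hord : x₃ ≤ x₂ ∧ x₂ ≤ x₁)
    (hsum : x₁ + x₂ + x₃ = -a)
    (hprod : x₁*x₂ + x₁*x₃ + x₂*x₃ = b) :
    x₁ - x₃ ≤ (Real.sqrt 12 / 3) * Real.sqrt (a^2 - 3*b) ∧
    (x₁ - x₃ = (Real.sqrt 12 / 3) * Real.sqrt (a^2 - 3*b) ↔ x₂ = (x₁ + x₃)/2) := by
  obtain ⟨h32, h21⟩ := hord
  have hD : a^2 - 3*b = ((x₁-x₂)^2 + (x₂-x₃)^2 + (x₁-x₃)^2)/2 := by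
    have ha : a = -(x₁+x₂+x₃) := by linarith
    subst ha; subst hprod; ring
  have hDnn : 0 ≤ a^2 - 3*b := by nlinarith [sq_nonneg (x₁-x₂), sq_nonneg (x₂-x₃), sq_nonneg (x₁-x₃)]
  set K := (Real.sqrt 12 / 3) * Real.sqrt (a^2 - 3*b) with hK
  have hKnn : 0 ≤ K := by positivity
  have hK2 : K^2 = (4/3) * (a^2 - 3*b) := by
    rw [hK, mul_pow, div_pow, Real.sq_sqrt (by norm_num : (12:ℝ) ≥ 0), Real.sq_sqrt hDnn]
    ring
  have hineq : x₁ - x₃ ≤ K := by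
    nlinarith [sq_nonneg (x₁ + x₃ - 2*x₂), sq_nonneg (K - (x₁ - x₃)), sq_nonneg (K + (x₁ - x₃))]
  refine ⟨hineq, ?_, ?_⟩
  · intro h
    nlinarith [sq_nonneg (x₁ + x₃ - 2*x₂)]
  · intro h
    have h2 : (x₁ - x₃)^2 = K^2 := by rw [hK2, hD, h]; ring
    have h13 : 0 ≤ x₁ - x₃ := by linarith
    nlinarith
end

section
/- If $b < a^2/3$ and $c < c_2 = -\frac{2}{27}a^3 + \frac{1}{3}ab - \frac{2}{27}\sqrt{(a^2-3b)^3}$, then every real root $x$ of $x^3 + ax^2 + bx + c$ satisfies $x > -a/3 + \frac{2}{3}\sqrt{a^2-3b}$. -/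
theorem stmt_13 (a b c : ℝ) (hb : b < a^2/3)
    (hc : c < -(2/27)*a^3 + (1/3)*a*b - (2/27)*Real.sqrt ((a^2-3*b)^3)) :
    ∀ x : ℝ, x^3 + a*x^2 + b*x + c = 0 →
      x > -a/3 + (2/3)*Real.sqrt (a^2-3*b) := by
  intro x hx
  by_contra h
  push_neg at h
  set s := Real.sqrt (a^2 - 3*b) with hs
  have hD : (0:ℝ) ≤ a^2 - 3*b := by nlinarith
  have hs0 : 0 ≤ s := Real.sqrt_nonneg _
  have hs2 : s^2 = a^2 - 3*b := Real.sq_sqrt hD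
  have hs3 : Real.sqrt ((a^2-3*b)^3) = s^3 := by
    rw [show (a^2-3*b)^3 = (s^3)^2 by rw [← hs2]; ring]
    exact Real.sqrt_sq (pow_nonneg hs0 3)
  rw [hs3] at hc
  have key : 27*(x^3 + a*x^2 + b*x + c) =
      (27*c + 2*a^3 - 9*a*b + 2*s^3) + (3*x+a+s)^2*(3*x+a-2*s) := by
    nlinarith [hs2, sq_nonneg s]
  nlinarith [sq_nonneg (3*x+a+s), key, hx, h, hc, mul_nonneg (sq_nonneg (3*x+a+s)) hs0]
end

section
/- If $b < a^2/3$ and $c > c_1 = -\frac{2}{27}a^3 + \frac{1}{3}ab + \frac{2}{27}\sqrt{(a^2-3b)^3}$, then every real root $x$ of $x^3 + ax^2 + bx + c$ satisfies $x < -a/3 - \frac{2}{3}\sqrt{a^2-3b}$. -/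
theorem stmt_14 (a b c : ℝ) (hb : b < a^2/3)
    (hc : c > -(2/27)*a^3 + (1/3)*a*b + (2/27)*Real.sqrt ((a^2-3*b)^3)) :
    ∀ x : ℝ, x^3 + a*x^2 + b*x + c = 0 →
      x < -a/3 - (2/3)*Real.sqrt (a^2-3*b) := by
  intro x hx
  set s := Real.sqrt (a^2-3*b) with hs
  have hpos : (0:ℝ) < a^2 - 3*b := by linarith
  have hs0 : 0 ≤ s := Real.sqrt_nonneg _
  have hs2 : s^2 = a^2 - 3*b := Real.sq_sqrt hpos.le
  have hcube : Real.sqrt ((a^2-3*b)^3) = s^3 := by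
    rw [show (a^2-3*b)^3 = (s^3)^2 by rw [← hs2]; ring]
    exact Real.sqrt_sq (by positivity)
  rw [hcube] at hc
  by_contra h
  push_neg at h
  nlinarith [sq_nonneg (x + a/3 - s/3),
    mul_nonneg (by linarith : (0:ℝ) ≤ x + a/3 + 2*s/3) (sq_nonneg (x + a/3 - s/3))]
end

section
/- If $b > a^2/3$, $a \ge 0$, and $c > 0$, then the unique real root $x_1$ of $x^3 + ax^2 + bx + c$ satisfies $\min\{-a, -c/b\} \le x_1 \le \max\{-a, -c/b\}$. -/
theorem stmt_18 (a b c : ℝ) (hb : b > a^2/3) (ha : a ≥ 0) (hc : c > 0) :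
    (∃! x : ℝ, x^3 + a*x^2 + b*x + c = 0) ∧
    ∀ x : ℝ, x^3 + a*x^2 + b*x + c = 0 →
      min (-a) (-c/b) ≤ x ∧ x ≤ max (-a) (-c/b) := by
  have hb0 : b > 0 := lt_of_le_of_lt (by positivity) hb
  set f : ℝ → ℝ := fun x => x^3 + a*x^2 + b*x + c with hf
  have hmono : StrictMono f := by
    intro x y hxy
    have hQ : x^2 + x*y + y^2 + a*(x+y) + b > 0 := by
      nlinarith [sq_nonneg (2*x + y + a), sq_nonneg (3*y + a)]
    have key : f y - f x = (y - x) * (x^2 + x*y + y^2 + a*(x+y) + b) := by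
      simp only [hf]; ring
    nlinarith [mul_pos (sub_pos.mpr hxy) hQ]
  have hcont : Continuous f := by simp only [hf]; continuity
  have hfa : f (-a) = c - a*b := by simp only [hf]; ring
  have hfc : f (-c/b) = c^2 * (a*b - c) / b^3 := by
    simp only [hf]; field_simp; ring
  set m := min (-a) (-c/b) with hm
  set M := max (-a) (-c/b) with hM
  have hmM : m ≤ M := min_le_max
  have hfm : f m = min (f (-a)) (f (-c/b)) := hmono.monotone.map_min
  have hfM : f M = max (f (-a)) (f (-c/b)) := hmono.monotone.map_max
  have hsign : f m ≤ 0 ∧ 0 ≤ f M := by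
    rcases le_total (a*b) c with h | h
    · constructor
      · rw [hfm]
        refine min_le_of_right_le ?_
        rw [hfc]
        have : c^2 * (a*b - c) ≤ 0 := mul_nonpos_of_nonneg_of_nonpos (sq_nonneg c) (by linarith)
        exact div_nonpos_of_nonpos_of_nonneg this (by positivity)
      · rw [hfM]
        refine le_max_of_le_left ?_
        rw [hfa]; linarith
    · constructor
      · rw [hfm]
        refine min_le_of_left_le ?_
        rw [hfa]; linarith
      · rw [hfM]
        refine le_max_of_le_right ?_
        rw [hfc]
        exact div_nonneg (mul_nonneg (sq_nonneg c) (by linarith)) (by positivity)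
  obtain ⟨x₀, hx₀mem, hx₀⟩ := intermediate_value_Icc hmM hcont.continuousOn
    (show (0:ℝ) ∈ Set.Icc (f m) (f M) from ⟨hsign.1, hsign.2⟩)
  constructor
  · exact ⟨x₀, hx₀, fun y hy => hmono.injective ((hy.trans hx₀.symm : f y = f x₀))⟩
  · intro x hx
    have hx' : f x = 0 := hx
    constructor
    · exact hmono.le_iff_le.mp (by rw [hx']; exact hsign.1)
    · exact hmono.le_iff_le.mp (by rw [hx']; exact hsign.2)
end

section
/- If $b < a^2/3$ and $c_0 \le c \le c_1$, then the largest real root $x_1$ of $x^3 + ax^2 + bx + c$ satisfies $\mu_1 \le x_1 \le \nu_1$, where $\mu_1 = -a/3 + \frac{1}{3}\sqrt{a^2-3b}$ and $\nu_1 = -a/3 + \sqrt{a^2/3 - b}$. -/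
lemma pos_at_big (a b c x : ℝ) (hx : |a| + |b| + |c| + 1 ≤ x) :
    0 < x^3 + a*x^2 + b*x + c := by
  have ha := abs_nonneg a
  have hb := abs_nonneg b
  have hc := abs_nonneg c
  have hx1 : 1 ≤ x := by linarith
  have h1 : -|a| * x^2 ≤ a * x^2 :=
    mul_le_mul_of_nonneg_right (neg_abs_le a) (sq_nonneg x)
  have h2 : -|b| * x ≤ b * x :=
    mul_le_mul_of_nonneg_right (neg_abs_le b) (by linarith)
  have h3 : -|c| ≤ c := neg_abs_le c
  nlinarith [sq_nonneg x, mul_nonneg hb (by nlinarith : (0:ℝ) ≤ x^2 - x),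
    mul_nonneg hc (by nlinarith : (0:ℝ) ≤ x^2 - 1),
    mul_nonneg (by linarith : (0:ℝ) ≤ x - 1 - |a| - |b| - |c|) (sq_nonneg x)]

theorem stmt_19 (a b c : ℝ) (hb : b < a^2/3)
    (hc0 : -(2/27)*a^3 + (1/3)*a*b ≤ c)
    (hc1 : c ≤ -(2/27)*a^3 + (1/3)*a*b + (2/27)*Real.sqrt ((a^2-3*b)^3)) :
    ∀ x₁ : ℝ, (x₁^3 + a*x₁^2 + b*x₁ + c = 0 ∧
        ∀ x : ℝ, x^3 + a*x^2 + b*x + c = 0 → x ≤ x₁) →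
      -a/3 + (1/3)*Real.sqrt (a^2-3*b) ≤ x₁ ∧
      x₁ ≤ -a/3 + Real.sqrt (a^2/3 - b) := by
  rintro x₁ ⟨hroot, hmax⟩
  have hd : 0 < a^2 - 3*b := by linarith
  set s := Real.sqrt (a^2-3*b) with hsdef
  have hs2 : s^2 = a^2-3*b := Real.sq_sqrt hd.le
  have hs0 : 0 ≤ s := Real.sqrt_nonneg _
  have hcube : Real.sqrt ((a^2-3*b)^3) = (a^2-3*b) * s := by
    rw [pow_succ, Real.sqrt_mul (by positivity), Real.sqrt_sq hd.le]
  rw [hcube] at hc1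
  constructor
  · -- lower bound
    set μ := -a/3 + (1/3)*s with hμdef
    have hfμ : μ^3 + a*μ^2 + b*μ + c ≤ 0 := by
      have hid : μ^3 + a*μ^2 + b*μ + c
          = c - (-(2/27)*a^3 + (1/3)*a*b + (2/27)*(a^2-3*b)*s) := by
        rw [hμdef]; linear_combination (s/27) * hs2
      rw [hid]; linarith
    set M := |a| + |b| + |c| + 1 + max μ 0 with hMdef
    have hMμ : μ ≤ M := by
      have := le_max_left μ 0
      have := abs_nonneg a; have := abs_nonneg b; have := abs_nonneg c
      simp only [hMdef]; linarith
    have hfM : 0 < M^3 + a*M^2 + b*M + c :=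
      pos_at_big a b c M (by simp only [hMdef]; nlinarith [le_max_right μ 0])
    have hcont : ContinuousOn (fun x : ℝ => x^3 + a*x^2 + b*x + c) (Set.Icc μ M) := by
      apply Continuous.continuousOn; continuity
    have hsub := intermediate_value_Icc hMμ hcont
    have h0mem : (0:ℝ) ∈ Set.Icc (μ^3 + a*μ^2 + b*μ + c) (M^3 + a*M^2 + b*M + c) :=
      ⟨hfμ, hfM.le⟩
    obtain ⟨x', hx'mem, hx'eq⟩ := hsub h0mem
    exact le_trans hx'mem.1 (hmax x' hx'eq)
  · -- upper bound
    by_contra h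
    push_neg at h
    set t := Real.sqrt (a^2/3 - b) with htdef
    have ht2 : t^2 = a^2/3 - b := Real.sq_sqrt (by linarith)
    have ht0 : 0 ≤ t := Real.sqrt_nonneg _
    have hy : t < x₁ + a/3 := by linarith
    have key : (x₁+a/3) * ((x₁+a/3) - t) * ((x₁+a/3)+t)
        = x₁^3 + a*x₁^2 + b*x₁ + (-(2/27)*a^3 + (1/3)*a*b) := by
      linear_combination (-(x₁+a/3)) * ht2
    have hpos : 0 < (x₁+a/3) * ((x₁+a/3) - t) * ((x₁+a/3)+t) :=
      mul_pos (mul_pos (by linarith) (by linarith)) (by linarith)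
    linarith [key, hroot, hc0]
end
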